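/- arXiv:2509.06879 — 2 statements merged into one kernel-verified Lean document; each statement's English description precedes it below -/
import Mathlib

section
/- (Class D + η₊ reduction) Let H be an N×N complex matrix, η a Hermitian unitary (ηᴴ = η, η² = 1) with η Hᴴ η = H, and C a unitary with C Hᵀ Cᴴ = −H, C·C̄ = 1, and C η̄ = η C. Then the matrix ηH is Hermitian and satisfies a class-D particle-hole symmetry with operator ηC: (ηC)(ηH)ᵀ(ηC)ᴴ = −(ηH) and (ηC)·(ηC)‾ = 1, where (ηC)‾ denotes the entrywise conjugate of ηC. -/
open Matrix

/-- Class D + η₊ reduction: `η H` is Hermitian and `η C` implements a class-D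
particle-hole symmetry on it. -/
theorem classD_eta_plus_reduction {N : ℕ}
    (H η C : Matrix (Fin N) (Fin N) ℂ)
    (hη : ηᴴ = η) (hη2 : η * η = 1)
    (hpH : η * Hᴴ * η = H)
    (hC : C ∈ Matrix.unitaryGroup (Fin N) ℂ)
    (hPHS : C * Hᵀ * Cᴴ = -H)
    (hCC : C * C.map (starRingEnd ℂ) = 1)
    (hcomm : C * η.map (starRingEnd ℂ) = η * C) :
    (η * H)ᴴ = η * H ∧
    (η * C) * (η * H)ᵀ * (η * C)ᴴ = -(η * H) ∧
    (η * C) * (η * C).map (starRingEnd ℂ) = 1 := by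
  have hηt : η.map (starRingEnd ℂ) = ηᵀ := by
    ext i j
    simpa [Matrix.map_apply, Matrix.transpose_apply, Matrix.conjTranspose_apply]
      using congrFun (congrFun hη j) i
  have hH' : Hᴴ = η * H * η := by
    conv_rhs => rw [← hpH]
    rw [show η * (η * Hᴴ * η) * η = (η * η) * Hᴴ * (η * η) from by noncomm_ring,
      hη2, one_mul, mul_one]
  -- transposed commuting relation: η̄ * Cᴴ = Cᴴ * η
  have hcomm' : η.map (starRingEnd ℂ) * Cᴴ = Cᴴ * η := by
    have := congrArg Matrix.conjTranspose hcomm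
    rw [Matrix.conjTranspose_mul, Matrix.conjTranspose_mul, hη] at this
    rwa [show (η.map (starRingEnd ℂ))ᴴ = η.map (starRingEnd ℂ) from by
      ext i j
      simpa [Matrix.conjTranspose_apply, Matrix.map_apply]
        using congrArg star (congrFun (congrFun hη i) j)] at this
  refine ⟨?_, ?_, ?_⟩
  · rw [Matrix.conjTranspose_mul, hη, hH']
    rw [show η * H * η * η = η * H * (η * η) from by noncomm_ring, hη2, mul_one]
  · rw [Matrix.transpose_mul, Matrix.conjTranspose_mul, hη, ← hηt]
    calc η * C * (Hᵀ * η.map (starRingEnd ℂ)) * (Cᴴ * η)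
        = η * (C * Hᵀ * Cᴴ) * η * η := by
          rw [show η * C * (Hᵀ * η.map (starRingEnd ℂ)) * (Cᴴ * η)
              = η * (C * Hᵀ) * (η.map (starRingEnd ℂ) * Cᴴ) * η from by noncomm_ring,
            hcomm']
          noncomm_ring
      _ = -(η * H) := by
          rw [hPHS, show η * -H * η * η = -(η * H) * (η * η) from by noncomm_ring,
            hη2, mul_one]
  · rw [Matrix.map_mul, show η * C * (η.map (starRingEnd ℂ) * C.map (starRingEnd ℂ))
        = η * (C * η.map (starRingEnd ℂ)) * C.map (starRingEnd ℂ) from by noncomm_ring,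
      hcomm, show η * (η * C) * C.map (starRingEnd ℂ)
        = (η * η) * (C * C.map (starRingEnd ℂ)) from by noncomm_ring,
      hη2, hCC, mul_one]
end

section
/- (Class D + η₋ reduction) Let H be an N×N complex matrix, η a Hermitian unitary (ηᴴ = η, η² = 1) with η Hᴴ η = H, and C a unitary with C Hᵀ Cᴴ = −H, C·C̄ = 1, and C η̄ = −η C. Then the antiunitary operator built from ηC acts as a time-reversal-type symmetry on the Hermitian matrix ηH: (ηC)(ηH)ᵀ(ηC)ᴴ = ηH and (ηC)·(ηC)‾ = −1 (quaternionic, Kramers-type). -/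
open Matrix

/-- Class D + η₋ reduction: `η C` acts as a Kramers-type (quaternionic)
time-reversal symmetry on the Hermitian matrix `η H`. -/
theorem classD_eta_minus_reduction {N : ℕ}
    (H η C : Matrix (Fin N) (Fin N) ℂ)
    (hη : ηᴴ = η) (hη2 : η * η = 1)
    (hpH : η * Hᴴ * η = H)
    (hC : C ∈ Matrix.unitaryGroup (Fin N) ℂ)
    (hPHS : C * Hᵀ * Cᴴ = -H)
    (hCC : C * C.map (starRingEnd ℂ) = 1)
    (hanticomm : C * η.map (starRingEnd ℂ) = -(η * C)) :
    (η * C) * (η * H)ᵀ * (η * C)ᴴ = η * H ∧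
    (η * C) * (η * C).map (starRingEnd ℂ) = -1 := by
  have hηt : ηᵀ = η.map (starRingEnd ℂ) := by
    ext i j
    have := congrFun (congrFun hη j) i
    simp only [conjTranspose_apply] at this
    simp [Matrix.map_apply, ← this]
  have hmapH : (η.map (starRingEnd ℂ))ᴴ = η.map (starRingEnd ℂ) := by
    ext i j
    simp only [conjTranspose_apply, Matrix.map_apply, starRingEnd_apply, star_star]
    have := congrFun (congrFun hη i) j
    simp only [conjTranspose_apply] at this
    rw [← this, star_star]
  have h2 : η.map (starRingEnd ℂ) * Cᴴ = -(Cᴴ * η) := by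
    have := congrArg conjTranspose hanticomm
    simpa [conjTranspose_mul, hmapH, hη] using this
  constructor
  · have : (η * C) * (η * H)ᵀ * (η * C)ᴴ
        = η * (C * Hᵀ * (η.map (starRingEnd ℂ) * Cᴴ)) * η := by
      rw [transpose_mul, conjTranspose_mul, hηt, hη]
      noncomm_ring
    rw [this, h2]
    have : η * (C * Hᵀ * -(Cᴴ * η)) * η = -(η * (C * Hᵀ * Cᴴ) * (η * η)) := by
      noncomm_ring
    rw [this, hPHS, hη2]
    noncomm_ring
  · have hmapmul : (η * C).map (starRingEnd ℂ)
        = η.map (starRingEnd ℂ) * C.map (starRingEnd ℂ) := by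
      ext i j
      simp [Matrix.map_apply, Matrix.mul_apply, map_sum]
    rw [hmapmul]
    calc η * C * (η.map (starRingEnd ℂ) * C.map (starRingEnd ℂ))
        = η * (C * η.map (starRingEnd ℂ)) * C.map (starRingEnd ℂ) := by noncomm_ring
      _ = η * -(η * C) * C.map (starRingEnd ℂ) := by rw [hanticomm]
      _ = -((η * η) * (C * C.map (starRingEnd ℂ))) := by noncomm_ring
      _ = -1 := by rw [hη2, hCC]; simp
end
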